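/- Let f_n(t) = Σ_{k∈ℤ} (1/ε_n − |t/ε_n − (2k+1)n|)·1_{|t−(2k+1)n| ≤ ε_n} for a summable sequence (ε_n) in (0,1], and f = Σ_{n≥1} f_n. Then f : ℝ → ℝ is continuous but not uniformly continuous (indeed unbounded), hence f is not Bohr almost periodic. -/

import Mathlib

def RelativelyDense (A : Set ℝ) : Prop :=
  ∃ l > 0, ∀ t : ℝ, ∃ a ∈ A, a ∈ Set.Icc t (t + l)

def IsBohrAlmostPeriodic (x : ℝ → ℝ) : Prop :=
  Continuous x ∧
    ∀ ε > 0, RelativelyDense {τ : ℝ | ∀ t : ℝ, dist (x t) (x (t + τ)) ≤ ε}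

/-- The `n`-th 'tent' function: a sum over `k ∈ ℤ` of tents of height `1/e`
supported on `{|t - (2k+1)n| ≤ e}` around the points `(2k+1)n`. -/
noncomputable def tentSum (e : ℝ) (n : ℕ) (t : ℝ) : ℝ :=
  ∑' k : ℤ,
    Set.indicator {s : ℝ | |s - (2 * (k : ℝ) + 1) * n| ≤ e}
      (fun s => 1 / e - |s - (2 * (k : ℝ) + 1) * n| / e ^ 2) t

/-! ### Auxiliary lemmas -/

/-- A single tent. -/
noncomputable def tent (e : ℝ) (n : ℕ) (k : ℤ) (t : ℝ) : ℝ :=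
  Set.indicator {s : ℝ | |s - (2 * (k : ℝ) + 1) * n| ≤ e}
    (fun s => 1 / e - |s - (2 * (k : ℝ) + 1) * n| / e ^ 2) t

lemma tentSum_def (e : ℝ) (n : ℕ) (t : ℝ) :
    tentSum e n t = ∑' k : ℤ, tent e n k t := rfl

lemma tent_eq_max {e : ℝ} (he : 0 < e) (n : ℕ) (k : ℤ) (t : ℝ) :
    tent e n k t = max 0 ((e - |t - (2 * (k : ℝ) + 1) * n|) / e ^ 2) := by
  set c : ℝ := (2 * (k : ℝ) + 1) * n with hc
  by_cases h : |t - c| ≤ e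
  · rw [tent, Set.indicator_of_mem (by exact h), eq_comm, max_eq_right]
    · field_simp
      ring
    · apply div_nonneg (by linarith) (by positivity)
  · rw [tent, Set.indicator_of_notMem (by exact h), eq_comm, max_eq_left]
    push_neg at h
    exact div_nonpos_of_nonpos_of_nonneg (by linarith) (by positivity)

lemma tent_nonneg {e : ℝ} (he : 0 < e) (n : ℕ) (k : ℤ) (t : ℝ) :
    0 ≤ tent e n k t := by
  rw [tent_eq_max he]; exact le_max_left _ _

lemma tent_le {e : ℝ} (he : 0 < e) (n : ℕ) (k : ℤ) (t : ℝ) :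
    tent e n k t ≤ 1 / e := by
  rw [tent_eq_max he]
  apply max_le (by positivity)
  have h1 : (e - |t - (2 * (k : ℝ) + 1) * n|) ≤ e := by
    have := abs_nonneg (t - (2 * (k : ℝ) + 1) * n); linarith
  calc (e - |t - (2 * (k : ℝ) + 1) * n|) / e ^ 2 ≤ e / e ^ 2 := by
        apply div_le_div_of_nonneg_right h1 (by positivity) |>.trans_eq rfl
    _ = 1 / e := by field_simp

lemma tent_continuous {e : ℝ} (he : 0 < e) (n : ℕ) (k : ℤ) :
    Continuous (tent e n k) := by
  have : tent e n k = fun t => max 0 ((e - |t - (2 * (k : ℝ) + 1) * n|) / e ^ 2) :=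
    funext (tent_eq_max he n k)
  rw [this]
  exact continuous_const.max (((continuous_const.sub
    ((continuous_id.sub continuous_const).abs)).div_const _))

lemma tent_ne_zero {e : ℝ} (he : 0 < e) {n : ℕ} {k : ℤ} {t : ℝ}
    (h : tent e n k t ≠ 0) : |t - (2 * (k : ℝ) + 1) * n| < e := by
  by_contra h'
  push_neg at h'
  apply h
  rw [tent_eq_max he, max_eq_left]
  exact div_nonpos_of_nonpos_of_nonneg (by linarith) (by positivity)

lemma tent_unique {e : ℝ} (he : 0 < e) (he1 : e ≤ 1) {n : ℕ} (hn : 1 ≤ n) {k k' : ℤ} {t : ℝ}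
    (hk : tent e n k t ≠ 0) (hk' : tent e n k' t ≠ 0) : k = k' := by
  have h1 := tent_ne_zero he hk
  have h2 := tent_ne_zero he hk'
  have hn' : (1 : ℝ) ≤ n := by exact_mod_cast hn
  have hd : |(2 * (k : ℝ) + 1) * n - (2 * (k' : ℝ) + 1) * n| < 2 * e := by
    calc |(2 * (k : ℝ) + 1) * n - (2 * (k' : ℝ) + 1) * n|
        = |(t - (2 * (k' : ℝ) + 1) * n) - (t - (2 * (k : ℝ) + 1) * n)| := by ring_nf
      _ ≤ |t - (2 * (k' : ℝ) + 1) * n| + |t - (2 * (k : ℝ) + 1) * n| := abs_sub _ _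
      _ < 2 * e := by linarith
  have heq : (2 * (k : ℝ) + 1) * n - (2 * (k' : ℝ) + 1) * n = 2 * ((k : ℝ) - k') * n := by
    ring
  rw [heq, abs_mul, abs_mul, abs_two, abs_of_nonneg (by positivity : (0:ℝ) ≤ (n:ℝ))] at hd
  have hkk : |(k : ℝ) - (k' : ℝ)| < 1 := by
    nlinarith [abs_nonneg ((k : ℝ) - k')]
  have : |((k - k' : ℤ) : ℝ)| < 1 := by push_cast; exact hkk
  have : |k - k'| < 1 := by exact_mod_cast this
  have h4 := abs_lt.mp this
  omega

lemma tentSum_nonneg {e : ℝ} (he : 0 < e) (n : ℕ) (t : ℝ) :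
    0 ≤ tentSum e n t := by
  rw [tentSum_def]
  exact tsum_nonneg fun k => tent_nonneg he n k t

lemma tentSum_le {e : ℝ} (he : 0 < e) (he1 : e ≤ 1) {n : ℕ} (hn : 1 ≤ n) (t : ℝ) :
    tentSum e n t ≤ 1 / e := by
  rw [tentSum_def]
  by_cases h : ∀ k, tent e n k t = 0
  · rw [tsum_eq_sum (s := ∅) (fun b _ => h b)]
    simp
    positivity
  · push_neg at h
    obtain ⟨k₀, hk₀⟩ := h
    rw [tsum_eq_single k₀ (fun b hb => by
      by_contra hb0
      exact hb (tent_unique he he1 hn hb0 hk₀))]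
    exact tent_le he n k₀ t

lemma tentSum_eq_zero {e : ℝ} {n : ℕ} {t : ℝ}
    (h : ∀ k : ℤ, ¬ |t - (2 * (k : ℝ) + 1) * n| ≤ e) : tentSum e n t = 0 := by
  rw [tentSum_def]
  have h0 : ∀ k : ℤ, tent e n k t = 0 := fun k => by
    rw [tent]
    exact Set.indicator_of_notMem
      (s := {s : ℝ | |s - (2 * (k : ℝ) + 1) * n| ≤ e}) (h k) _
  exact (tsum_congr h0).trans tsum_zero

lemma odd_mul_abs_ge {n : ℕ} (hn : 1 ≤ n) (k : ℤ) :
    (n : ℝ) ≤ |(2 * (k : ℝ) + 1) * n| := by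
  have h1 : (1 : ℤ) ≤ |2 * k + 1| := Int.one_le_abs (by omega)
  have h1' : (1 : ℝ) ≤ |2 * (k : ℝ) + 1| := by
    have : ((|2 * k + 1| : ℤ) : ℝ) = |2 * (k : ℝ) + 1| := by push_cast; rfl
    rw [← this]; exact_mod_cast h1
  rw [abs_mul, abs_of_nonneg (by positivity : (0:ℝ) ≤ (n:ℝ))]
  nlinarith [Nat.cast_nonneg (α := ℝ) n]

lemma tentSum_zero_of_far {e : ℝ} {n : ℕ} (hn : 1 ≤ n) {t : ℝ}
    (h : |t| + e < n) : tentSum e n t = 0 := by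
  apply tentSum_eq_zero
  intro k
  push_neg
  have h1 := odd_mul_abs_ge hn k
  have h2 : |(2 * (k : ℝ) + 1) * n| - |t| ≤ |t - (2 * (k : ℝ) + 1) * n| := by
    have := abs_sub_abs_le_abs_sub ((2 * (k : ℝ) + 1) * n) t
    have heq : |(2 * (k : ℝ) + 1) * n - t| = |t - (2 * (k : ℝ) + 1) * n| := abs_sub_comm _ _
    linarith [heq ▸ this]
  linarith

lemma tentSum_half {e : ℝ} (he2 : e < 1 / 2) (n : ℕ) (j : ℤ) :
    tentSum e n ((j : ℝ) + 1 / 2) = 0 := by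
  apply tentSum_eq_zero
  intro k
  push_neg
  set z : ℤ := j - (2 * k + 1) * n with hz
  have heq : (j : ℝ) + 1 / 2 - (2 * (k : ℝ) + 1) * n = (z : ℝ) + 1 / 2 := by
    push_cast [hz]; ring
  rw [heq]
  rcases le_or_gt 0 z with hz0 | hz0
  · have : (0 : ℝ) ≤ z := by exact_mod_cast hz0
    calc e < 1 / 2 := he2
      _ ≤ (z : ℝ) + 1 / 2 := by linarith
      _ ≤ |(z : ℝ) + 1 / 2| := le_abs_self _
  · have hz1 : z ≤ -1 := by omega
    have : (z : ℝ) ≤ -1 := by exact_mod_cast hz1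
    calc e < 1 / 2 := he2
      _ ≤ -((z : ℝ) + 1 / 2) := by linarith
      _ ≤ |(z : ℝ) + 1 / 2| := neg_le_abs _

lemma tentSum_peak {e : ℝ} (he : 0 < e) (he1 : e ≤ 1) {n : ℕ} (hn : 1 ≤ n) :
    tentSum e n (n : ℝ) = 1 / e := by
  rw [tentSum_def, tsum_eq_single 0]
  · have hmem : ((n : ℝ)) ∈ {s : ℝ | |s - (2 * ((0 : ℤ) : ℝ) + 1) * n| ≤ e} := by
      simp only [Set.mem_setOf_eq, Int.cast_zero]
      norm_num
      exact le_of_lt he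
    rw [tent, Set.indicator_of_mem hmem]
    simp
  · intro k hk
    have hn' : (1 : ℝ) ≤ n := by exact_mod_cast hn
    apply Set.indicator_of_notMem
    simp only [Set.mem_setOf_eq]
    push_neg
    have h1 : (1 : ℤ) ≤ |k| := Int.one_le_abs hk
    have h1' : (1 : ℝ) ≤ |(k : ℝ)| := by exact_mod_cast h1
    have heq : (n : ℝ) - (2 * (k : ℝ) + 1) * n = -(2 * k * n) := by ring
    rw [heq, abs_neg, abs_mul, abs_mul, abs_two,
      abs_of_nonneg (by positivity : (0:ℝ) ≤ (n:ℝ))]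
    nlinarith

lemma tent_support_bound {e : ℝ} (he : 0 < e) (he1 : e ≤ 1) {n : ℕ} (hn : 1 ≤ n)
    {k : ℤ} {t t₀ : ℝ} (ht : |t - t₀| < 1) (h0 : tent e n k t ≠ 0) :
    k ∈ Finset.Icc (-(⌈|t₀|⌉ + 3)) (⌈|t₀|⌉ + 3) := by
  have hn' : (1 : ℝ) ≤ n := by exact_mod_cast hn
  have hlt := tent_ne_zero he h0
  have hc : |(2 * (k : ℝ) + 1) * n| ≤ |t₀| + 2 := by
    have h1 : |(2 * (k : ℝ) + 1) * n| ≤ |t| + e := by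
      have := abs_sub_abs_le_abs_sub ((2 * (k : ℝ) + 1) * n) t
      have heq : |(2 * (k : ℝ) + 1) * n - t| = |t - (2 * (k : ℝ) + 1) * n| := abs_sub_comm _ _
      linarith [heq ▸ this]
    have h2 : |t| ≤ |t₀| + 1 := by
      have := abs_sub_abs_le_abs_sub t t₀
      linarith
    linarith
  have hk1 : |2 * (k : ℝ) + 1| ≤ |t₀| + 2 := by
    rw [abs_mul, abs_of_nonneg (by positivity : (0:ℝ) ≤ (n:ℝ))] at hc
    nlinarith [abs_nonneg (2 * (k : ℝ) + 1)]
  have hk2 : |(k : ℝ)| ≤ |t₀| + 3 := by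
    have h2k : |2 * (k : ℝ)| ≤ |2 * (k : ℝ) + 1| + 1 := by
      calc |2 * (k : ℝ)| = |(2 * (k : ℝ) + 1) + (-1)| := by ring_nf
        _ ≤ |2 * (k : ℝ) + 1| + |(-1 : ℝ)| := abs_add_le _ _
        _ = |2 * (k : ℝ) + 1| + 1 := by norm_num
    rw [abs_mul, abs_two] at h2k
    nlinarith [abs_nonneg (k : ℝ)]
  have hceil : |t₀| ≤ (⌈|t₀|⌉ : ℝ) := Int.le_ceil _
  have : |(k : ℝ)| ≤ ((⌈|t₀|⌉ + 3 : ℤ) : ℝ) := by push_cast; linarith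
  have habs : |k| ≤ ⌈|t₀|⌉ + 3 := by exact_mod_cast this
  rw [Finset.mem_Icc]
  exact abs_le.mp habs

lemma tentSum_continuous {e : ℝ} (he : 0 < e) (he1 : e ≤ 1) {n : ℕ} (hn : 1 ≤ n) :
    Continuous (tentSum e n) := by
  rw [continuous_iff_continuousAt]
  intro t₀
  set K : Finset ℤ := Finset.Icc (-(⌈|t₀|⌉ + 3)) (⌈|t₀|⌉ + 3) with hK
  have key : ∀ t : ℝ, |t - t₀| < 1 → tentSum e n t = ∑ k ∈ K, tent e n k t := by
    intro t ht
    rw [tentSum_def]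
    apply tsum_eq_sum
    intro k hk
    by_contra h0
    exact hk (tent_support_bound he he1 hn ht h0)
  have hg : Continuous (fun t => ∑ k ∈ K, tent e n k t) :=
    continuous_finset_sum _ fun k _ => tent_continuous he n k
  apply hg.continuousAt.congr
  filter_upwards [Metric.ball_mem_nhds t₀ one_pos] with t ht
  exact (key t (by simpa [Real.dist_eq] using ht)).symm

/-- Chain bound: a uniformly continuous function has bounded increments over distance 1. -/
lemma uc_chain_bound {f : ℝ → ℝ} (hf : UniformContinuous f) :
    ∃ C : ℝ, ∀ a b : ℝ, |a - b| ≤ 1 → |f a - f b| ≤ C := by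
  obtain ⟨δ, hδ, h⟩ := Metric.uniformContinuous_iff.mp hf 1 one_pos
  obtain ⟨N, hN⟩ := exists_nat_gt (1 / δ)
  have hN0 : 0 < (N : ℝ) := lt_of_le_of_lt (by positivity) hN
  refine ⟨N, fun a b hab => ?_⟩
  set d : ℝ := (b - a) / N with hd
  have hdlt : |d| < δ := by
    rw [hd, abs_div, abs_of_nonneg hN0.le]
    rw [div_lt_iff₀ hN0]
    have h2 : |b - a| ≤ 1 := by rw [abs_sub_comm]; exact hab
    have h3 : 1 < δ * N := by
      rw [div_lt_iff₀ hδ] at hN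
      linarith [hN]
    linarith
  have htel : ∑ i ∈ Finset.range N, (f (a + i * d) - f (a + (i + 1 : ℕ) * d))
      = f a - f b := by
    rw [Finset.sum_range_sub' (fun i : ℕ => f (a + i * d)) N]
    congr 2
    · simp
    · rw [hd]
      field_simp
      ring
  calc |f a - f b| = |∑ i ∈ Finset.range N, (f (a + i * d) - f (a + (i + 1 : ℕ) * d))| := by
        rw [htel]
    _ ≤ ∑ i ∈ Finset.range N, |f (a + i * d) - f (a + (i + 1 : ℕ) * d)| :=
        Finset.abs_sum_le_sum_abs _ _
    _ ≤ ∑ _i ∈ Finset.range N, (1 : ℝ) := by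
        apply Finset.sum_le_sum
        intro i _
        have hdist : dist (a + i * d) (a + (i + 1 : ℕ) * d) < δ := by
          rw [Real.dist_eq]
          have : a + (i : ℝ) * d - (a + ((i : ℕ) + 1 : ℕ) * d) = -d := by push_cast; ring
          rw [this, abs_neg]
          exact hdlt
        have := h hdist
        rw [Real.dist_eq] at this
        exact this.le
    _ = N := by simp

/-- Bohr almost periodic functions are bounded above. -/
lemma bohr_bddAbove {f : ℝ → ℝ} (hf : IsBohrAlmostPeriodic f) :
    BddAbove (Set.range f) := by
  obtain ⟨hcont, hb⟩ := hf
  obtain ⟨l, hl, hA⟩ := hb 1 one_pos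
  have hcomp : IsCompact (Set.Icc (0 : ℝ) l) := isCompact_Icc
  obtain ⟨M, hM⟩ := (hcomp.image_of_continuousOn hcont.continuousOn).bddAbove
  refine ⟨M + 1, ?_⟩
  rintro y ⟨t, rfl⟩
  obtain ⟨τ, hτA, hτI⟩ := hA (-t)
  have hmem : t + τ ∈ Set.Icc (0 : ℝ) l := by
    obtain ⟨h1, h2⟩ := hτI
    constructor <;> linarith
  have h1 : f (t + τ) ≤ M := hM ⟨t + τ, hmem, rfl⟩
  have h2 : dist (f t) (f (t + τ)) ≤ 1 := hτA t
  rw [Real.dist_eq] at h2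
  have := abs_le.mp h2
  linarith [this.2]

/-- Ursell-type counterexample: `f = Σ_{n ≥ 1} f_n` is continuous, unbounded,
not uniformly continuous, hence not Bohr almost periodic. -/
theorem ursell_counterexample (ε : ℕ → ℝ)
    (hε : ∀ n : ℕ, 1 ≤ n → ε n ∈ Set.Ioc (0 : ℝ) 1)
    (hsum : Summable fun n : ℕ => ε (n + 1))
    (f : ℝ → ℝ) (hf : f = fun t => ∑' n : ℕ, tentSum (ε (n + 1)) (n + 1) t) :
    Continuous f ∧ ¬ BddAbove (Set.range f) ∧ ¬ UniformContinuous f ∧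
      ¬ IsBohrAlmostPeriodic f := by
  have hεpos : ∀ n : ℕ, 0 < ε (n + 1) := fun n => (hε (n + 1) (by omega)).1
  have hfa : ∀ t : ℝ, f t = ∑' n : ℕ, tentSum (ε (n + 1)) (n + 1) t := fun t => by rw [hf]
  have hεle : ∀ n : ℕ, ε (n + 1) ≤ 1 := fun n => (hε (n + 1) (by omega)).2
  have hn1 : ∀ n : ℕ, 1 ≤ n + 1 := fun n => by omega
  -- vanishing of far-away tents
  have hfar : ∀ (t : ℝ) (n : ℕ), |t| + 1 < (n + 1 : ℕ) →
      tentSum (ε (n + 1)) (n + 1) t = 0 := by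
    intro t n h
    apply tentSum_zero_of_far (hn1 n)
    have := hεle n
    push_cast at h ⊢
    linarith
  -- outer summability at each point
  have houtersum : ∀ t : ℝ, Summable (fun n : ℕ => tentSum (ε (n + 1)) (n + 1) t) := by
    intro t
    apply summable_of_ne_finset_zero (s := Finset.range (⌈|t|⌉₊ + 1))
    intro n hn
    rw [Finset.mem_range, not_lt] at hn
    apply hfar
    have h1 : |t| ≤ (⌈|t|⌉₊ : ℝ) := Nat.le_ceil _
    have h2 : (⌈|t|⌉₊ + 1 : ℕ) ≤ n := hn
    have h2' : ((⌈|t|⌉₊ : ℕ) : ℝ) + 1 ≤ (n : ℝ) := by exact_mod_cast h2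
    push_cast
    linarith
  -- continuity
  have hcont : Continuous f := by
    rw [hf, continuous_iff_continuousAt]
    intro t₀
    set N : ℕ := ⌈|t₀|⌉₊ + 3 with hN
    have key : ∀ t : ℝ, |t - t₀| < 1 →
        (∑' n : ℕ, tentSum (ε (n + 1)) (n + 1) t)
          = ∑ n ∈ Finset.range N, tentSum (ε (n + 1)) (n + 1) t := by
      intro t ht
      apply tsum_eq_sum
      intro n hn
      rw [Finset.mem_range, not_lt] at hn
      apply hfar
      have h1 : |t₀| ≤ (⌈|t₀|⌉₊ : ℝ) := Nat.le_ceil _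
      have h2 : |t| ≤ |t₀| + 1 := by
        have := abs_sub_abs_le_abs_sub t t₀
        linarith
      have h3 : ((⌈|t₀|⌉₊ : ℕ) : ℝ) + 3 ≤ (n : ℝ) := by exact_mod_cast hn
      push_cast
      linarith
    have hg : Continuous (fun t => ∑ n ∈ Finset.range N, tentSum (ε (n + 1)) (n + 1) t) :=
      continuous_finset_sum _ fun n _ =>
        tentSum_continuous (hεpos n) (hεle n) (hn1 n)
    apply hg.continuousAt.congr
    filter_upwards [Metric.ball_mem_nhds t₀ one_pos] with t ht
    exact (key t (by simpa [Real.dist_eq] using ht)).symm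
  -- peak values: f (n+1) ≥ 1 / ε (n+1)
  have hpeak : ∀ n : ℕ, 1 / ε (n + 1) ≤ f ((n + 1 : ℕ) : ℝ) := by
    intro n
    rw [hfa]
    have hle := Summable.le_tsum (houtersum ((n + 1 : ℕ) : ℝ)) n
      (fun j _ => tentSum_nonneg (hεpos j) _ _)
    rwa [tentSum_peak (hεpos n) (hεle n) (hn1 n)] at hle
  -- ε (n+1) → 0
  have htend : Filter.Tendsto (fun n : ℕ => ε (n + 1)) Filter.atTop (nhds 0) :=
    hsum.tendsto_atTop_zero
  -- unboundedness
  have hlarge : ∀ M : ℝ, ∃ n : ℕ, M < f ((n + 1 : ℕ) : ℝ) := by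
    intro M
    have hev : ∀ᶠ n in Filter.atTop, ε (n + 1) < 1 / (|M| + 1) := by
      have hpos : (0 : ℝ) < 1 / (|M| + 1) := by positivity
      exact (htend.eventually (eventually_lt_nhds hpos)).mono fun n h => h
    obtain ⟨n, hn⟩ := hev.exists
    refine ⟨n, lt_of_lt_of_le ?_ (hpeak n)⟩
    have h1 : (0 : ℝ) < ε (n + 1) := hεpos n
    have h2 : |M| + 1 < 1 / ε (n + 1) := by
      rw [lt_div_iff₀ h1]
      rw [lt_div_iff₀ (by positivity : (0:ℝ) < |M| + 1)] at hn
      linarith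
    calc M ≤ |M| := le_abs_self M
      _ < 1 / ε (n + 1) := by linarith
  have hbdd : ¬ BddAbove (Set.range f) := by
    rintro ⟨M, hM⟩
    obtain ⟨n, hn⟩ := hlarge M
    exact absurd (hM ⟨((n + 1 : ℕ) : ℝ), rfl⟩) (not_le.mpr hn)
  -- bound at half-integers
  have hhalf : ∃ C : ℝ, ∀ j : ℤ, f ((j : ℝ) + 1 / 2) ≤ C := by
    have hev : ∀ᶠ n in Filter.atTop, ε (n + 1) < 1 / 2 := by
      have hpos : (0 : ℝ) < 1 / 2 := by norm_num
      exact (htend.eventually (eventually_lt_nhds hpos)).mono fun n h => h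
    obtain ⟨N, hN⟩ := hev.exists_forall_of_atTop
    refine ⟨2 * N, fun j => ?_⟩
    rw [hfa]
    have hzero : ∀ n ∉ Finset.range N, tentSum (ε (n + 1)) (n + 1) ((j : ℝ) + 1 / 2) = 0 := by
      intro n hn
      rw [Finset.mem_range, not_lt] at hn
      exact tentSum_half (hN n hn) (n + 1) j
    rw [tsum_eq_sum hzero]
    calc ∑ n ∈ Finset.range N, tentSum (ε (n + 1)) (n + 1) ((j : ℝ) + 1 / 2)
        ≤ ∑ _n ∈ Finset.range N, (2 : ℝ) := by
          apply Finset.sum_le_sum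
          intro n _
          rcases lt_or_ge (ε (n + 1)) (1 / 2) with h | h
          · rw [tentSum_half h (n + 1) j]; norm_num
          · calc tentSum (ε (n + 1)) (n + 1) ((j : ℝ) + 1 / 2)
                ≤ 1 / ε (n + 1) := tentSum_le (hεpos n) (hεle n) (hn1 n) _
              _ ≤ 2 := by
                  rw [div_le_iff₀ (hεpos n)]
                  linarith
      _ = 2 * N := by simp [mul_comm]
  -- not uniformly continuous
  have hnuc : ¬ UniformContinuous f := by
    intro huc
    obtain ⟨C, hC⟩ := uc_chain_bound huc
    obtain ⟨C₂, hC₂⟩ := hhalf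
    obtain ⟨n, hn⟩ := hlarge (C + C₂)
    have hj : f (((n + 1 : ℕ) : ℝ)) - f ((((n + 1 : ℕ) : ℤ) : ℝ) + 1 / 2) ≤ C := by
      have h1 := hC ((n + 1 : ℕ) : ℝ) ((((n + 1 : ℕ) : ℤ) : ℝ) + 1 / 2) (by
        push_cast
        rw [abs_le]
        constructor <;> linarith)
      have := (abs_le.mp h1).2
      linarith
    have h2 := hC₂ ((n + 1 : ℕ) : ℤ)
    have h3 : C + C₂ < f ((n + 1 : ℕ) : ℝ) := hn
    linarith
  refine ⟨hcont, hbdd, hnuc, fun hb => hbdd (bohr_bddAbove hb)⟩
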